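/- arXiv:2301.04486 — 3 statements merged into one kernel-verified Lean document; each statement's English description precedes it below -/
import Mathlib

section
/- Let α ∈ (0,1) be irrational with convergents p_n/q_n and β_{n-1} = |q_{n-1} α − p_{n-1}|. If 2 q_{n-1} q_n / q_{n+1} < 1, then ⌊1/β_{n-1}⌋ = q_n and G(β_{n-1}) = q_{n-1}·α_n < 2 q_{n-1} q_n / q_{n+1}, where α_n = G^n(α). -/
open scoped BigOperators

/-- The Gauss map `x ↦ 1/x - ⌊1/x⌋` (with `G 0 = 0`). -/
noncomputable def gaussMap (x : ℝ) : ℝ := if x = 0 then 0 else 1 / x - ⌊1 / x⌋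

/-- Iterates `α_n = G^n(α)` of the Gauss map. -/
noncomputable def alphaSeq (α : ℝ) (n : ℕ) : ℝ := gaussMap^[n] α

/-- Partial quotients `a_n` of the continued fraction of `α`. -/
noncomputable def aSeq (α : ℝ) : ℕ → ℤ
  | 0 => 0
  | n + 1 => ⌊1 / alphaSeq α n⌋

/-- Denominators `q_n` of the best rational approximations of `α`. -/
noncomputable def qSeq (α : ℝ) : ℕ → ℤ
  | 0 => 1
  | 1 => ⌊1 / α⌋
  | n + 2 => qSeq α n + aSeq α (n + 2) * qSeq α (n + 1)

/-- Numerators `p_n` of the best rational approximations of `α`. -/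
noncomputable def pSeq (α : ℝ) : ℕ → ℤ
  | 0 => 0
  | 1 => 1
  | n + 2 => pSeq α n + aSeq α (n + 2) * pSeq α (n + 1)

noncomputable def bSeq (α : ℝ) (n : ℕ) : ℝ := ∏ i ∈ Finset.range (n + 1), alphaSeq α i

noncomputable def dSeq (α : ℝ) (n : ℕ) : ℝ := (qSeq α n : ℝ) * α - (pSeq α n : ℝ)

lemma alphaSeq_zero (α : ℝ) : alphaSeq α 0 = α := rfl

lemma alphaSeq_succ (α : ℝ) (n : ℕ) : alphaSeq α (n + 1) = gaussMap (alphaSeq α n) :=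
  Function.iterate_succ_apply' _ _ _

lemma alpha_prop (α : ℝ) (hα : α ∈ Set.Ioo (0 : ℝ) 1) (hirr : Irrational α) :
    ∀ n, Irrational (alphaSeq α n) ∧ alphaSeq α n ∈ Set.Ioo (0 : ℝ) 1 := by
  intro n
  induction n with
  | zero => exact ⟨hirr, hα⟩
  | succ n ih =>
    obtain ⟨hI, h0, h1⟩ := ih
    have hne : alphaSeq α n ≠ 0 := ne_of_gt h0
    have hG : alphaSeq α (n + 1) = Int.fract (1 / alphaSeq α n) := by
      rw [alphaSeq_succ, gaussMap, if_neg hne, Int.fract]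
    have hinv : Irrational (1 / alphaSeq α n) := by
      simpa [one_div] using hI.inv
    have hIf : Irrational (Int.fract (1 / alphaSeq α n)) := by
      simpa [Int.fract, sub_eq_add_neg] using hinv.sub_intCast ⌊1 / alphaSeq α n⌋
    refine ⟨hG ▸ hIf, ?_, ?_⟩
    · rw [hG]
      rcases lt_or_eq_of_le (Int.fract_nonneg (1 / alphaSeq α n)) with h | h
      · exact h
      · exfalso
        exact hIf.ne_int 0 (by simpa using h.symm)
    · rw [hG]; exact Int.fract_lt_one _

lemma aSeq_succ_eq (α : ℝ) (n : ℕ) : aSeq α (n + 1) = ⌊1 / alphaSeq α n⌋ := rfl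

lemma aSeq_one_le (α : ℝ) (hα : α ∈ Set.Ioo (0 : ℝ) 1) (hirr : Irrational α) (n : ℕ) :
    1 ≤ aSeq α (n + 1) := by
  obtain ⟨_, h0, h1⟩ := alpha_prop α hα hirr n
  rw [aSeq_succ_eq]
  refine Int.le_floor.2 ?_
  push_cast
  rw [le_div_iff₀ h0]
  linarith

lemma q_prop (α : ℝ) (hα : α ∈ Set.Ioo (0 : ℝ) 1) (hirr : Irrational α) :
    ∀ n, 1 ≤ qSeq α n ∧ qSeq α n ≤ qSeq α (n + 1) := by
  intro n
  induction n using Nat.strong_induction_on with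
  | _ n ih =>
    match n with
    | 0 =>
      refine ⟨le_refl _, ?_⟩
      show (1 : ℤ) ≤ qSeq α 1
      have := aSeq_one_le α hα hirr 0
      have hq1 : qSeq α 1 = ⌊1 / α⌋ := rfl
      have ha1 : aSeq α 1 = ⌊1 / alphaSeq α 0⌋ := rfl
      rw [hq1]
      rw [ha1, alphaSeq_zero] at this
      exact this
    | 1 =>
      have h0 := (ih 0 (by norm_num)).2
      have h1 : 1 ≤ qSeq α 1 := le_trans (ih 0 (by norm_num)).1 h0
      have ha := aSeq_one_le α hα hirr 1
      refine ⟨h1, ?_⟩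
      show qSeq α 1 ≤ qSeq α 0 + aSeq α 2 * qSeq α 1
      have hq0 : qSeq α 0 = 1 := rfl
      nlinarith
    | (m + 2) =>
      have h1 : 1 ≤ qSeq α m := (ih m (by omega)).1
      have h2 : 1 ≤ qSeq α (m + 1) := le_trans h1 (ih m (by omega)).2
      have ha : 1 ≤ aSeq α (m + 2) := aSeq_one_le α hα hirr (m + 1)
      have ha' : 1 ≤ aSeq α (m + 3) := aSeq_one_le α hα hirr (m + 2)
      have hq2 : qSeq α (m + 2) = qSeq α m + aSeq α (m + 2) * qSeq α (m + 1) := rfl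
      have h3 : 1 ≤ qSeq α (m + 2) := by rw [hq2]; nlinarith
      refine ⟨h3, ?_⟩
      show qSeq α (m + 2) ≤ qSeq α (m + 1) + aSeq α (m + 3) * qSeq α (m + 2)
      nlinarith

lemma bSeq_zero (α : ℝ) : bSeq α 0 = α := by simp [bSeq, alphaSeq_zero]

lemma bSeq_succ (α : ℝ) (n : ℕ) : bSeq α (n + 1) = alphaSeq α (n + 1) * bSeq α n := by
  rw [bSeq, bSeq, Finset.prod_range_succ, mul_comm]

lemma bSeq_pos (α : ℝ) (hα : α ∈ Set.Ioo (0 : ℝ) 1) (hirr : Irrational α) (n : ℕ) :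
    0 < bSeq α n := by
  induction n with
  | zero => rw [bSeq_zero]; exact hα.1
  | succ n ih =>
    rw [bSeq_succ]
    exact mul_pos (alpha_prop α hα hirr (n + 1)).2.1 ih

lemma bSeq_lt (α : ℝ) (hα : α ∈ Set.Ioo (0 : ℝ) 1) (hirr : Irrational α) (n : ℕ) :
    bSeq α (n + 1) < bSeq α n := by
  rw [bSeq_succ]
  nlinarith [bSeq_pos α hα hirr n, (alpha_prop α hα hirr (n + 1)).2.2,
    (alpha_prop α hα hirr (n + 1)).2.1]

lemma alphaSeq_eq (α : ℝ) (hα : α ∈ Set.Ioo (0 : ℝ) 1) (hirr : Irrational α) (n : ℕ) :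
    alphaSeq α (n + 1) = 1 / alphaSeq α n - (⌊1 / alphaSeq α n⌋ : ℝ) := by
  rw [alphaSeq_succ, gaussMap, if_neg (ne_of_gt (alpha_prop α hα hirr n).2.1)]

lemma d_rec (α : ℝ) (hα : α ∈ Set.Ioo (0 : ℝ) 1) (hirr : Irrational α) (n : ℕ) :
    dSeq α (n + 1) = -(alphaSeq α (n + 1)) * dSeq α n := by
  induction n with
  | zero =>
    have hne : α ≠ 0 := ne_of_gt hα.1
    have h1 : dSeq α 1 = (⌊1 / α⌋ : ℝ) * α - 1 := by
      simp [dSeq]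
      norm_num [qSeq, pSeq]
    have h0 : dSeq α 0 = α := by
      simp [dSeq]
      norm_num [qSeq, pSeq]
    rw [h1, h0, alphaSeq_eq α hα hirr 0, alphaSeq_zero]
    field_simp
    ring
  | succ m ih =>
    have h0 : alphaSeq α (m + 1) ≠ 0 := ne_of_gt (alpha_prop α hα hirr (m + 1)).2.1
    have hd2 : dSeq α (m + 2) = dSeq α m + (aSeq α (m + 2) : ℝ) * dSeq α (m + 1) := by
      show (((qSeq α m + aSeq α (m + 2) * qSeq α (m + 1)) : ℤ) : ℝ) * α -
          (((pSeq α m + aSeq α (m + 2) * pSeq α (m + 1)) : ℤ) : ℝ) = _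
      push_cast
      simp only [dSeq]
      ring
    have ha : (aSeq α (m + 2) : ℝ) = (⌊1 / alphaSeq α (m + 1)⌋ : ℝ) := by rw [aSeq_succ_eq]
    have hA : alphaSeq α (m + 2) = 1 / alphaSeq α (m + 1) - (⌊1 / alphaSeq α (m + 1)⌋ : ℝ) :=
      alphaSeq_eq α hα hirr (m + 1)
    have hdm : dSeq α m = -dSeq α (m + 1) / alphaSeq α (m + 1) := by
      rw [ih]; field_simp
    rw [hd2, hdm, ha, hA]
    field_simp
    ring

lemma d_eq (α : ℝ) (hα : α ∈ Set.Ioo (0 : ℝ) 1) (hirr : Irrational α) (n : ℕ) :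
    dSeq α n = (-1 : ℝ) ^ n * bSeq α n := by
  induction n with
  | zero =>
    have h0 : dSeq α 0 = α := by
      simp [dSeq]
      norm_num [qSeq, pSeq]
    rw [h0, bSeq_zero]; ring
  | succ m ih =>
    rw [d_rec α hα hirr m, ih, bSeq_succ]
    ring

lemma abs_d (α : ℝ) (hα : α ∈ Set.Ioo (0 : ℝ) 1) (hirr : Irrational α) (n : ℕ) :
    |dSeq α n| = bSeq α n := by
  rw [d_eq α hα hirr n, abs_mul, abs_pow, abs_neg, abs_one, one_pow, one_mul,
    abs_of_pos (bSeq_pos α hα hirr n)]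

lemma key_identity (α : ℝ) (hα : α ∈ Set.Ioo (0 : ℝ) 1) (hirr : Irrational α) (n : ℕ) :
    (qSeq α (n + 1) : ℝ) * bSeq α n + (qSeq α n : ℝ) * bSeq α (n + 1) = 1 := by
  induction n with
  | zero =>
    have hne : α ≠ 0 := ne_of_gt hα.1
    have hq1 : (qSeq α 1 : ℝ) = (⌊1 / α⌋ : ℝ) := rfl
    have hq0 : (qSeq α 0 : ℝ) = 1 := by norm_num [qSeq]
    rw [hq1, hq0, bSeq_zero, bSeq_succ, bSeq_zero, alphaSeq_eq α hα hirr 0, alphaSeq_zero]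
    field_simp
    ring
  | succ m ih =>
    have h0 : alphaSeq α (m + 1) ≠ 0 := ne_of_gt (alpha_prop α hα hirr (m + 1)).2.1
    have hq : (qSeq α (m + 2) : ℝ) = (qSeq α m : ℝ) + (aSeq α (m + 2) : ℝ) * (qSeq α (m + 1) : ℝ) := by
      show (((qSeq α m + aSeq α (m + 2) * qSeq α (m + 1)) : ℤ) : ℝ) = _
      push_cast; ring
    have ha : (aSeq α (m + 2) : ℝ) = (⌊1 / alphaSeq α (m + 1)⌋ : ℝ) := by rw [aSeq_succ_eq]
    have hA : alphaSeq α (m + 2) = 1 / alphaSeq α (m + 1) - (⌊1 / alphaSeq α (m + 1)⌋ : ℝ) :=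
      alphaSeq_eq α hα hirr (m + 1)
    have hb1 : bSeq α (m + 1) = alphaSeq α (m + 1) * bSeq α m := bSeq_succ α m
    have hb2 : bSeq α (m + 2) = alphaSeq α (m + 2) * bSeq α (m + 1) := bSeq_succ α (m + 1)
    rw [hq, ha, hb2, hA, hb1]
    rw [hb1] at ih
    have hx : (1 / alphaSeq α (m + 1) - (⌊1 / alphaSeq α (m + 1)⌋ : ℝ)) *
        (alphaSeq α (m + 1) * bSeq α m) =
        bSeq α m - (⌊1 / alphaSeq α (m + 1)⌋ : ℝ) * (alphaSeq α (m + 1) * bSeq α m) := by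
      field_simp
    rw [hx]
    linear_combination ih

/-- Let `α ∈ (0,1)` be irrational with convergents `p_n/q_n` and `β_{n-1} = |q_{n-1}α − p_{n-1}|`.
If `2 q_{n-1} q_n / q_{n+1} < 1`, then `⌊1/β_{n-1}⌋ = q_n` and
`G(β_{n-1}) = q_{n-1}·α_n < 2 q_{n-1} q_n / q_{n+1}`. -/
theorem stmt5 (α : ℝ) (hα : α ∈ Set.Ioo (0 : ℝ) 1) (hirr : Irrational α) (n : ℕ) (hn : 1 ≤ n)
    (hgap : 2 * (qSeq α (n - 1) : ℝ) * (qSeq α n : ℝ) / (qSeq α (n + 1) : ℝ) < 1) :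
    ⌊1 / |(qSeq α (n - 1) : ℝ) * α - (pSeq α (n - 1) : ℝ)|⌋ = qSeq α n ∧
    gaussMap (|(qSeq α (n - 1) : ℝ) * α - (pSeq α (n - 1) : ℝ)|) =
      (qSeq α (n - 1) : ℝ) * alphaSeq α n ∧
    (qSeq α (n - 1) : ℝ) * alphaSeq α n <
      2 * (qSeq α (n - 1) : ℝ) * (qSeq α n : ℝ) / (qSeq α (n + 1) : ℝ) := by
  obtain ⟨m, rfl⟩ : ∃ m, n = m + 1 := ⟨n - 1, by omega⟩
  simp only [Nat.add_sub_cancel] at hgap ⊢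
  -- abbreviations
  have habs : |(qSeq α m : ℝ) * α - (pSeq α m : ℝ)| = bSeq α m := abs_d α hα hirr m
  have hbm : 0 < bSeq α m := bSeq_pos α hα hirr m
  have hbm1 : 0 < bSeq α (m + 1) := bSeq_pos α hα hirr (m + 1)
  have hqm : (1 : ℝ) ≤ (qSeq α m : ℝ) := by exact_mod_cast (q_prop α hα hirr m).1
  have hqm1 : (1 : ℝ) ≤ (qSeq α (m + 1) : ℝ) := by
    exact_mod_cast (q_prop α hα hirr (m + 1)).1
  have hqm2 : (1 : ℝ) ≤ (qSeq α (m + 2) : ℝ) := by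
    exact_mod_cast (q_prop α hα hirr (m + 2)).1
  have hqmono : (qSeq α m : ℝ) ≤ (qSeq α (m + 1) : ℝ) := by
    exact_mod_cast (q_prop α hα hirr m).2
  have hid : (qSeq α (m + 1) : ℝ) * bSeq α m + (qSeq α m : ℝ) * bSeq α (m + 1) = 1 :=
    key_identity α hα hirr m
  have hid2 : (qSeq α (m + 2) : ℝ) * bSeq α (m + 1) + (qSeq α (m + 1) : ℝ) * bSeq α (m + 2) = 1 :=
    key_identity α hα hirr (m + 1)
  have hbm2 : 0 < bSeq α (m + 2) := bSeq_pos α hα hirr (m + 2)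
  -- β_{n} bounds
  have hub : (qSeq α (m + 2) : ℝ) * bSeq α (m + 1) < 1 := by nlinarith
  have hlt : bSeq α (m + 1) < bSeq α m := bSeq_lt α hα hirr m
  have hlb : 1 < 2 * (qSeq α (m + 1) : ℝ) * bSeq α m := by nlinarith
  -- the key value
  have hα1 : alphaSeq α (m + 1) = bSeq α (m + 1) / bSeq α m := by
    rw [bSeq_succ]; field_simp
  -- Goal 3
  have goal3 : (qSeq α m : ℝ) * alphaSeq α (m + 1) <
      2 * (qSeq α m : ℝ) * (qSeq α (m + 1) : ℝ) / (qSeq α (m + 2) : ℝ) := by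
    rw [hα1, ← mul_div_assoc, div_lt_div_iff₀ hbm (by linarith : (0:ℝ) < (qSeq α (m + 2) : ℝ))]
    -- need (q m) * b(m+1) * q(m+2) < 2 q m q(m+1) * b m
    nlinarith [mul_pos hbm1 (by linarith : (0:ℝ) < (qSeq α m : ℝ))]
  -- q_{n-1} α_n ∈ [0, 1)
  have hsmall : (qSeq α m : ℝ) * alphaSeq α (m + 1) < 1 := lt_trans goal3 hgap
  have halpos : 0 < alphaSeq α (m + 1) := (alpha_prop α hα hirr (m + 1)).2.1
  have hnn : 0 ≤ (qSeq α m : ℝ) * alphaSeq α (m + 1) := by positivity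
  -- 1/β_{n-1} = q_n + q_{n-1} α_n
  have hinvb : 1 / bSeq α m = (qSeq α (m + 1) : ℝ) + (qSeq α m : ℝ) * alphaSeq α (m + 1) := by
    rw [hα1]
    field_simp
    linarith [hid]
  -- Goal 1
  have goal1 : ⌊1 / bSeq α m⌋ = qSeq α (m + 1) := by
    rw [hinvb]
    rw [Int.floor_eq_iff]
    constructor
    · push_cast; linarith
    · push_cast; linarith
  refine ⟨by rw [habs]; exact goal1, ?_, goal3⟩
  rw [habs, gaussMap, if_neg (ne_of_gt hbm), goal1, hinvb]
  ring
end

section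
/- Let F be an orientation-preserving homeomorphism of ℝ×[0,1] commuting with T(x,y)=(x+1,y), whose rotation number ρ(F) := lim_n (p₁(Fⁿ(x̃)) − p₁(x̃))/n exists and equals α for boundary points. For a, b ∈ ℤ and n ≥ 1 with {nα} ≠ 0, if H is a homeomorphism of ℝ×[0,1] with F_n H = H T where F_n = T^{−⌊nα⌋}F^n, and J(x,y) = (−x,y), then the rotation number of (HJ)^{−1} T^b F^a (HJ) equals −(aα + b)/{nα}. -/
/-- The strip `ℝ × [0,1]`, universal cover of the annulus. -/
abbrev AnnulusCover : Type := ℝ × Set.Icc (0 : ℝ) 1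

/-- Horizontal translation `z ↦ (z₁ + k, z₂)`; `shiftA 1` is the deck transformation `T`. -/
def shiftA (k : ℝ) (z : AnnulusCover) : AnnulusCover := (z.1 + k, z.2)

/-- The reflection `J(x,y) = (−x,y)`. -/
def Jmap : Equiv.Perm AnnulusCover where
  toFun z := (-z.1, z.2)
  invFun z := (-z.1, z.2)
  left_inv z := by simp
  right_inv z := by simp


open Filter Set

namespace Stmt12Aux

lemma shiftA_fst (t : ℝ) (z : AnnulusCover) : (shiftA t z).1 = z.1 + t := rfl

lemma shiftA_add (s t : ℝ) (z : AnnulusCover) :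
    shiftA s (shiftA t z) = shiftA (t + s) z := by
  simp [shiftA, add_assoc]

lemma shiftA_zero (z : AnnulusCover) : shiftA 0 z = z := by
  simp [shiftA]

lemma continuous_shiftA (t : ℝ) : Continuous (shiftA t) := by
  unfold shiftA; fun_prop

def K0 : Set AnnulusCover := (Set.Icc (0:ℝ) 1) ×ˢ (Set.univ)

lemma isCompact_K0 : IsCompact K0 := isCompact_Icc.prod isCompact_univ

lemma exists_shift_mem (z : AnnulusCover) :
    ∃ (j : ℤ) (w : AnnulusCover), w ∈ K0 ∧ z = shiftA (j : ℝ) w := by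
  refine ⟨⌊z.1⌋, (Int.fract z.1, z.2), ⟨⟨Int.fract_nonneg _, (Int.fract_lt_one _).le⟩, trivial⟩, ?_⟩
  have : Int.fract z.1 + (⌊z.1⌋ : ℝ) = z.1 := Int.fract_add_floor z.1
  simp [shiftA, this]

lemma bounded_of_periodic (f : AnnulusCover → ℝ) (hf : Continuous f)
    (hper : ∀ z, f (shiftA 1 z) = f z) : ∃ M, 0 ≤ M ∧ ∀ z, |f z| ≤ M := by
  have hper' : ∀ (j : ℤ) (z), f (shiftA (j : ℝ) z) = f z := by
    have hstep : ∀ (s : ℝ) (z), f (shiftA (s + 1) z) = f (shiftA s z) := by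
      intro s z
      rw [← shiftA_add 1 s z, hper]
    intro j
    induction j using Int.induction_on with
    | zero => intro z; simp [shiftA_zero]
    | succ k ih => intro z; push_cast; rw [hstep]; exact ih z
    | pred k ih =>
        intro z
        have := hstep (-(k:ℝ) - 1) z
        push_cast
        rw [show (-(k:ℝ) - 1 + 1) = -(k:ℝ) by ring] at this
        rw [← this]
        exact_mod_cast ih z
  obtain ⟨C, hC⟩ := isCompact_K0.exists_bound_of_continuousOn hf.continuousOn
  refine ⟨max C 0, le_max_right _ _, fun z => ?_⟩
  obtain ⟨j, w, hw, rfl⟩ := exists_shift_mem z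
  rw [hper']
  exact le_trans (hC w hw) (le_max_left _ _)


lemma abs_sub_le' (x y : ℝ) : |x - y| ≤ |x| + |y| := by
  rw [sub_eq_add_neg]
  exact (abs_add_le _ _).trans (by rw [abs_neg])


def psi (H : AnnulusCover ≃ₜ AnnulusCover) (v : AnnulusCover) : ℝ := (H.symm v).1

lemma continuous_psi (H : AnnulusCover ≃ₜ AnnulusCover) : Continuous (psi H) :=
  continuous_fst.comp H.symm.continuous

-- powers as homeomorphisms (continuity)
lemma exists_homeo_pow (F : AnnulusCover ≃ₜ AnnulusCover) (d : ℤ) :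
    ∃ G : AnnulusCover ≃ₜ AnnulusCover, ((F.toEquiv : Equiv.Perm AnnulusCover) ^ d) = G.toEquiv := by
  have hnat : ∀ k : ℕ, ∃ G : AnnulusCover ≃ₜ AnnulusCover,
      ((F.toEquiv : Equiv.Perm AnnulusCover) ^ k) = G.toEquiv := by
    intro k
    induction k with
    | zero => exact ⟨Homeomorph.refl _, rfl⟩
    | succ k ih =>
        obtain ⟨G, hG⟩ := ih
        refine ⟨G.trans F, ?_⟩
        rw [pow_succ', hG]
        rfl
  rcases d with k | k
  · simpa using hnat k
  · obtain ⟨G, hG⟩ := hnat (k + 1)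
    refine ⟨G.symm, ?_⟩
    rw [zpow_negSucc, hG]
    rfl

lemma continuous_zpow (F : AnnulusCover ≃ₜ AnnulusCover) (d : ℤ) :
    Continuous fun z => ((F.toEquiv : Equiv.Perm AnnulusCover) ^ d) z := by
  obtain ⟨G, hG⟩ := exists_homeo_pow F d
  rw [hG]; exact G.continuous

variable (F : AnnulusCover ≃ₜ AnnulusCover)

def disp (d : ℤ) (z : AnnulusCover) : ℝ :=
  (((F.toEquiv : Equiv.Perm AnnulusCover) ^ d) z).1 - z.1

lemma continuous_disp (d : ℤ) : Continuous (disp F d) := by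
  apply Continuous.sub ((continuous_fst).comp (continuous_zpow F d)) continuous_fst

lemma zpow_apply_add (d k : ℤ) (z : AnnulusCover) :
    ((F.toEquiv : Equiv.Perm AnnulusCover) ^ (d + k)) z
      = ((F.toEquiv : Equiv.Perm AnnulusCover) ^ d)
          (((F.toEquiv : Equiv.Perm AnnulusCover) ^ k) z) := by
  rw [zpow_add]; rfl

lemma disp_add (d k : ℤ) (z : AnnulusCover) :
    disp F (d + k) z = disp F d (((F.toEquiv : Equiv.Perm AnnulusCover) ^ k) z) + disp F k z := by
  unfold disp
  rw [zpow_apply_add]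
  ring

variable (hcomm : ∀ z : AnnulusCover, F (shiftA 1 z) = shiftA 1 (F z))
include hcomm

lemma comm_zpow (d : ℤ) (z : AnnulusCover) :
    ((F.toEquiv : Equiv.Perm AnnulusCover) ^ d) (shiftA 1 z)
      = shiftA 1 (((F.toEquiv : Equiv.Perm AnnulusCover) ^ d) z) := by
  have hinv : ∀ w, F.toEquiv.symm (shiftA 1 w) = shiftA 1 (F.toEquiv.symm w) := by
    intro w
    apply F.toEquiv.injective
    rw [Equiv.apply_symm_apply]
    have : (F.toEquiv : Equiv.Perm AnnulusCover) (shiftA 1 (F.toEquiv.symm w))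
        = shiftA 1 (F.toEquiv (F.toEquiv.symm w)) := hcomm _
    rw [Equiv.apply_symm_apply] at this
    exact this.symm
  induction d using Int.induction_on with
  | zero => simp
  | succ k ih =>
      rw [show ((k:ℤ)+1) = 1 + (k:ℤ) by ring, zpow_apply_add F 1 k, zpow_apply_add F 1 k,
        ih, zpow_one]
      exact hcomm _
  | pred k ih =>
      rw [show (-(k:ℤ)-1) = (-1) + (-(k:ℤ)) by ring, zpow_apply_add F (-1) (-(k:ℤ)),
        zpow_apply_add F (-1) (-(k:ℤ)), ih, zpow_neg_one]
      exact hinv _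

lemma comm_shift_neg_one (d : ℤ) (w : AnnulusCover) :
    ((F.toEquiv : Equiv.Perm AnnulusCover) ^ d) (shiftA (-1) w)
      = shiftA (-1) (((F.toEquiv : Equiv.Perm AnnulusCover) ^ d) w) := by
  have h1 : shiftA 1 (shiftA (-1) w) = w := by rw [shiftA_add]; norm_num [shiftA_zero]
  have h := comm_zpow F hcomm d (shiftA (-1) w)
  rw [h1] at h
  have := congrArg (shiftA (-1)) h
  rw [shiftA_add] at this
  norm_num [shiftA_zero] at this
  exact this.symm

lemma comm_shift_int (d s : ℤ) (z : AnnulusCover) :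
    ((F.toEquiv : Equiv.Perm AnnulusCover) ^ d) (shiftA (s : ℝ) z)
      = shiftA (s : ℝ) (((F.toEquiv : Equiv.Perm AnnulusCover) ^ d) z) := by
  induction s using Int.induction_on with
  | zero => simp [shiftA_zero]
  | succ k ih =>
      push_cast at ih ⊢
      rw [← shiftA_add (1:ℝ) (k:ℝ) z, comm_zpow F hcomm, ih, shiftA_add]
  | pred k ih =>
      push_cast at ih ⊢
      rw [show (-(k:ℝ)-1) = (-(k:ℝ)) + (-1 : ℝ) by ring, ← shiftA_add (-1 : ℝ) (-(k:ℝ)) z,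
        comm_shift_neg_one F hcomm, ih, shiftA_add]

lemma disp_shift (d s : ℤ) (z : AnnulusCover) :
    disp F d (shiftA (s : ℝ) z) = disp F d z := by
  unfold disp
  rw [comm_shift_int F hcomm, shiftA_fst, shiftA_fst]
  ring


variable (α : ℝ)

section Unif

variable (hrot : ∀ z : AnnulusCover, Filter.Tendsto
      (fun m : ℕ => ((((F.toEquiv : Equiv.Perm AnnulusCover) ^ m) z).1 - z.1) / (m : ℝ))
      Filter.atTop (nhds α))
include hrot

omit hcomm in
lemma hrot_disp (z : AnnulusCover) :
    Tendsto (fun m : ℕ => disp F (m : ℤ) z / m) atTop (nhds α) := by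
  refine (hrot z).congr fun m => ?_
  simp [disp, zpow_natCast]

omit hcomm in
lemma exists_good_time (ε : ℝ) (hε : 0 < ε) (z : AnnulusCover) :
    ∃ k : ℕ, 1 ≤ k ∧ |disp F (k : ℤ) z - k * α| < ε * k := by
  have h1 : ∀ᶠ m : ℕ in atTop, dist (disp F (m:ℤ) z / m) α < ε :=
    (hrot_disp F α hrot z).eventually (Metric.ball_mem_nhds α hε)
  obtain ⟨k, hk1, hk2⟩ := (h1.and (eventually_ge_atTop 1)).exists
  refine ⟨k, hk2, ?_⟩
  rw [Real.dist_eq] at hk1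
  have hkpos : (0:ℝ) < k := by exact_mod_cast hk2
  have : disp F (k:ℤ) z - k * α = (disp F (k:ℤ) z / k - α) * k := by
    field_simp
  rw [this, abs_mul, abs_of_pos hkpos]
  exact mul_lt_mul_of_pos_right hk1 hkpos

theorem unif (ε : ℝ) (hε : 0 < ε) :
    ∃ C, 0 ≤ C ∧ ∀ (m : ℕ) (z : AnnulusCover), |disp F (m:ℤ) z - m * α| ≤ ε * m + C := by
  classical
  -- bound on one-step displacement
  obtain ⟨M, hM0, hM⟩ := bounded_of_periodic (disp F 1) (continuous_disp F 1)
    (fun z => by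
      have := disp_shift F hcomm 1 1 z
      push_cast at this
      exact this)
  -- crude bound
  have crude : ∀ (m : ℕ) (z : AnnulusCover), |disp F (m:ℤ) z| ≤ M * m := by
    intro m
    induction m with
    | zero => intro z; simp [disp]
    | succ m ih =>
        intro z
        have hd : disp F ((m:ℤ)+1) z
            = disp F 1 (((F.toEquiv : Equiv.Perm AnnulusCover) ^ (m:ℤ)) z) + disp F (m:ℤ) z := by
          rw [add_comm]
          exact disp_add F 1 (m:ℤ) z
        have h1 := hM (((F.toEquiv : Equiv.Perm AnnulusCover) ^ (m:ℤ)) z)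
        have h2 := ih z
        have : |disp F ((m:ℤ)+1) z| ≤ M + M * m := by
          rw [hd]
          exact (abs_add_le _ _).trans (by linarith)
        push_cast
        calc |disp F ((m:ℤ)+1) z| ≤ M + M * m := this
        _ = M * ((m:ℝ) + 1) := by ring
  -- open cover of the fundamental domain
  set W : ℕ → Set AnnulusCover :=
    fun k => {w | |disp F ((k+1 : ℕ) : ℤ) w - ((k:ℝ)+1) * α| < ε * ((k:ℝ)+1)} with hW
  have hWopen : ∀ k, IsOpen (W k) := by
    intro k
    exact isOpen_lt (((continuous_disp F _).sub continuous_const).abs) continuous_const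
  have hcover : K0 ⊆ ⋃ k, W k := by
    intro w _
    obtain ⟨k, hk1, hk⟩ := exists_good_time F α hrot ε hε w
    obtain ⟨k', rfl⟩ : ∃ k', k = k' + 1 := ⟨k - 1, by omega⟩
    refine mem_iUnion.mpr ⟨k', ?_⟩
    simpa [hW] using (by push_cast at hk ⊢; convert hk using 3 <;> push_cast <;> ring)
  obtain ⟨t, ht⟩ := isCompact_K0.elim_finite_subcover W hWopen hcover
  set N : ℕ := t.sup id + 1 with hN
  have hN1 : 1 ≤ N := by omega
  have good : ∀ z : AnnulusCover, ∃ k : ℕ, 1 ≤ k ∧ k ≤ N ∧ |disp F (k:ℤ) z - k * α| < ε * k := by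
    intro z
    obtain ⟨j, w, hw, rfl⟩ := exists_shift_mem z
    obtain ⟨i, hit, hiw⟩ := mem_iUnion₂.mp (ht hw)
    refine ⟨i + 1, by omega, by
      have h := Finset.le_sup (f := id) hit
      simp only [id] at h
      omega, ?_⟩
    have hsh := disp_shift F hcomm ((i:ℤ)+1) j w
    have : |disp F ((i:ℤ)+1) w - ((i:ℝ)+1) * α| < ε * ((i:ℝ)+1) := hiw
    push_cast
    rw [show ((i:ℤ)+1) = (((i+1:ℕ)):ℤ) by push_cast; ring] at hsh
    push_cast at hsh
    rw [hsh]
    push_cast at this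
    convert this using 3 <;> ring
  refine ⟨N * (M + |α|), by positivity, ?_⟩
  intro m
  induction m using Nat.strong_induction_on with
  | _ m ih =>
    intro z
    by_cases hmN : m ≤ N
    · have h1 := crude m z
      have h2 : |disp F (m:ℤ) z - m * α| ≤ |disp F (m:ℤ) z| + |(m:ℝ) * α| := abs_sub_le' _ _
      have h3 : |(m:ℝ) * α| = (m:ℝ) * |α| := by
        rw [abs_mul, abs_of_nonneg (by positivity : (0:ℝ) ≤ (m:ℝ))]
      have h4 : (m:ℝ) ≤ N := by exact_mod_cast hmN
      have h5 : (0:ℝ) ≤ ε * m := by positivity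
      nlinarith [abs_nonneg α]
    · push_neg at hmN
      obtain ⟨k, hk1, hkN, hkgood⟩ := good z
      have hkm : k ≤ m := by omega
      set w := ((F.toEquiv : Equiv.Perm AnnulusCover) ^ (k:ℤ)) z with hwdef
      have hcast : ((m - k : ℕ) : ℤ) + (k:ℤ) = (m:ℤ) := by omega
      have hdecomp : disp F (m:ℤ) z = disp F ((m-k:ℕ):ℤ) w + disp F (k:ℤ) z := by
        rw [← hcast]
        exact disp_add F _ _ z
      have hih := ih (m - k) (by omega) w
      have hcastR : ((m - k : ℕ) : ℝ) = (m:ℝ) - k := by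
        push_cast [Nat.cast_sub hkm]; ring
      have key : disp F (m:ℤ) z - m * α
          = (disp F ((m-k:ℕ):ℤ) w - ((m-k:ℕ):ℝ) * α) + (disp F (k:ℤ) z - k * α) := by
        rw [hdecomp, hcastR]; ring
      calc |disp F (m:ℤ) z - m * α|
          ≤ |disp F ((m-k:ℕ):ℤ) w - ((m-k:ℕ):ℝ) * α| + |disp F (k:ℤ) z - k * α| := by
            rw [key]; exact abs_add_le _ _
        _ ≤ (ε * ((m-k:ℕ):ℝ) + N * (M + |α|)) + ε * k := by linarith [hkgood.le]
        _ = ε * m + N * (M + |α|) := by rw [hcastR]; ring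

theorem unif' (ε : ℝ) (hε : 0 < ε) :
    ∃ C, 0 ≤ C ∧ ∀ (d : ℤ) (z : AnnulusCover), |disp F d z - d * α| ≤ ε * |(d:ℝ)| + C := by
  obtain ⟨C, hC0, hC⟩ := unif F hcomm α hrot ε hε
  refine ⟨C, hC0, ?_⟩
  intro d z
  rcases le_or_gt 0 d with hd | hd
  · lift d to ℕ using hd
    have h := hC d z
    push_cast
    rwa [abs_of_nonneg (by positivity : (0:ℝ) ≤ ((d:ℕ):ℝ))]
  · set k : ℕ := (-d).toNat with hk
    have hkd : (k:ℤ) = -d := Int.toNat_of_nonneg (by omega)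
    have h0 : disp F ((k:ℤ) + d) z
        = disp F (k:ℤ) (((F.toEquiv : Equiv.Perm AnnulusCover) ^ d) z) + disp F d z :=
      disp_add F _ _ z
    have hzero : disp F ((k:ℤ) + d) z = 0 := by
      rw [hkd]; simp [disp]
    have hrel : disp F d z = -disp F (k:ℤ) (((F.toEquiv : Equiv.Perm AnnulusCover) ^ d) z) := by
      linarith [h0, hzero]
    have hC' := hC k (((F.toEquiv : Equiv.Perm AnnulusCover) ^ d) z)
    have hkR : ((k:ℕ):ℝ) = -(d:ℝ) := by exact_mod_cast congrArg (Int.cast : ℤ → ℝ) hkd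
    have habs : |(d:ℝ)| = ((k:ℕ):ℝ) := by
      rw [hkR, abs_of_neg (by exact_mod_cast hd : (d:ℝ) < 0)]
    rw [habs]
    calc |disp F d z - d * α| = |disp F (k:ℤ) _ - (k:ℕ) * α| := by
          rw [hrel, hkR]
          rw [show (-disp F (k:ℤ) (((F.toEquiv : Equiv.Perm AnnulusCover) ^ d) z) - (d:ℝ) * α)
              = -(disp F (k:ℤ) (((F.toEquiv : Equiv.Perm AnnulusCover) ^ d) z) - (-(d:ℝ)) * α) by ring]
          rw [abs_neg]
      _ ≤ ε * (k:ℕ) + C := hC'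

end Unif

section Psi

variable (H : AnnulusCover ≃ₜ AnnulusCover) (n : ℕ) (p : ℤ)
variable (hH : ∀ z : AnnulusCover,
    shiftA (-(p:ℝ)) (((F.toEquiv : Equiv.Perm AnnulusCover) ^ (n:ℤ)) (H z)) = H (shiftA 1 z))
include hH

omit hcomm in
lemma psi1 (v : AnnulusCover) :
    psi H (shiftA (-(p:ℝ)) (((F.toEquiv : Equiv.Perm AnnulusCover) ^ (n:ℤ)) v))
      = psi H v + 1 := by
  have h := hH (H.symm v)
  rw [Homeomorph.apply_symm_apply] at h
  unfold psi
  rw [h, Homeomorph.symm_apply_apply, shiftA_fst]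

lemma psi1' (v : AnnulusCover) :
    psi H (shiftA ((p:ℝ)) (((F.toEquiv : Equiv.Perm AnnulusCover) ^ (-(n:ℤ))) v))
      = psi H v - 1 := by
  have h := psi1 F H n p hH (shiftA ((p:ℝ)) (((F.toEquiv : Equiv.Perm AnnulusCover) ^ (-(n:ℤ))) v))
  have hid : shiftA (-(p:ℝ)) (((F.toEquiv : Equiv.Perm AnnulusCover) ^ (n:ℤ))
      (shiftA ((p:ℝ)) (((F.toEquiv : Equiv.Perm AnnulusCover) ^ (-(n:ℤ))) v))) = v := by
    rw [comm_shift_int F hcomm (n:ℤ) p, shiftA_add, ← zpow_apply_add]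
    simp [shiftA_zero]
  rw [hid] at h
  linarith

lemma psij : ∀ (j : ℤ) (v : AnnulusCover),
    psi H (shiftA (((-(j*p)) : ℤ) : ℝ) (((F.toEquiv : Equiv.Perm AnnulusCover) ^ (j*(n:ℤ))) v))
      = psi H v + j := by
  intro j
  induction j using Int.induction_on with
  | zero => intro v; simp [shiftA_zero]
  | succ k ih =>
      intro v
      have h1 : ((F.toEquiv : Equiv.Perm AnnulusCover) ^ (((k:ℤ)+1)*(n:ℤ))) v
          = ((F.toEquiv : Equiv.Perm AnnulusCover) ^ (n:ℤ))
              (((F.toEquiv : Equiv.Perm AnnulusCover) ^ ((k:ℤ)*(n:ℤ))) v) := by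
        rw [show ((k:ℤ)+1)*(n:ℤ) = (n:ℤ) + (k:ℤ)*(n:ℤ) by ring]
        exact zpow_apply_add F _ _ v
      have harg : (((-(((k:ℤ)+1)*p)) : ℤ) : ℝ) = ((-((k:ℤ)*p) : ℤ) : ℝ) + (-(p:ℝ)) := by
        push_cast; ring
      rw [h1, harg, ← shiftA_add, ← comm_shift_int F hcomm (n:ℤ) (-((k:ℤ)*p)),
        psi1 F H n p hH, ih]
      push_cast
      ring
  | pred k ih =>
      intro v
      have h1 : ((F.toEquiv : Equiv.Perm AnnulusCover) ^ ((-(k:ℤ)-1)*(n:ℤ))) v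
          = ((F.toEquiv : Equiv.Perm AnnulusCover) ^ (-(n:ℤ)))
              (((F.toEquiv : Equiv.Perm AnnulusCover) ^ ((-(k:ℤ))*(n:ℤ))) v) := by
        rw [show (-(k:ℤ)-1)*(n:ℤ) = (-(n:ℤ)) + (-(k:ℤ))*(n:ℤ) by ring]
        exact zpow_apply_add F _ _ v
      have harg : (((-((-(k:ℤ)-1)*p)) : ℤ) : ℝ) = ((-((-(k:ℤ))*p) : ℤ) : ℝ) + ((p:ℝ)) := by
        push_cast; ring
      rw [h1, harg, ← shiftA_add, ← comm_shift_int F hcomm (-(n:ℤ)) (-((-(k:ℤ))*p)),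
        psi1' F hcomm H n p hH, ih]
      push_cast
      ring

lemma psi_step : ∃ M, 0 ≤ M ∧ ∀ v, |psi H (shiftA 1 v) - psi H v| ≤ M := by
  set δ : AnnulusCover → ℝ := fun z => psi H (shiftA 1 (H z)) - z.1 with hδ
  have hcont : Continuous δ :=
    ((continuous_psi H).comp ((continuous_shiftA 1).comp H.continuous)).sub continuous_fst
  have hper : ∀ z, δ (shiftA 1 z) = δ z := by
    intro z
    have h1 : H (shiftA 1 z)
        = shiftA (-(p:ℝ)) (((F.toEquiv : Equiv.Perm AnnulusCover) ^ (n:ℤ)) (H z)) := (hH z).symm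
    have h2 : shiftA 1 (H (shiftA 1 z))
        = shiftA (-(p:ℝ)) (((F.toEquiv : Equiv.Perm AnnulusCover) ^ (n:ℤ)) (shiftA 1 (H z))) := by
      rw [h1, shiftA_add, comm_zpow F hcomm, shiftA_add,
        show (-(p:ℝ) + 1) = (1 + -(p:ℝ)) by ring]
    have h3 : psi H (shiftA 1 (H (shiftA 1 z))) = psi H (shiftA 1 (H z)) + 1 := by
      rw [h2, psi1 F H n p hH]
    simp only [hδ]
    rw [h3, shiftA_fst]
    ring
  obtain ⟨M, hM0, hM⟩ := bounded_of_periodic δ hcont hper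
  refine ⟨M, hM0, fun v => ?_⟩
  have h := hM (H.symm v)
  simp only [hδ] at h
  rw [Homeomorph.apply_symm_apply] at h
  exact h

omit hcomm hH in
lemma psi_shift_int (M : ℝ) (hM : ∀ v, |psi H (shiftA 1 v) - psi H v| ≤ M) :
    ∀ (s : ℤ) (v : AnnulusCover), |psi H (shiftA (s:ℝ) v) - psi H v| ≤ M * |(s:ℝ)| := by
  have hMneg : ∀ v, |psi H (shiftA (-1:ℝ) v) - psi H v| ≤ M := by
    intro v
    have h := hM (shiftA (-1:ℝ) v)
    rw [shiftA_add] at h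
    norm_num [shiftA_zero] at h
    rw [abs_sub_comm] at h
    exact h
  intro s
  induction s using Int.induction_on with
  | zero => intro v; simp [shiftA_zero]
  | succ k ih =>
      intro v
      have h1 : shiftA (((k:ℤ)+1 : ℤ):ℝ) v = shiftA 1 (shiftA ((k:ℤ):ℝ) v) := by
        rw [shiftA_add]; push_cast; ring_nf
      rw [h1]
      have := hM (shiftA ((k:ℤ):ℝ) v)
      have h2 := ih v
      have habs1 : |((k:ℤ):ℝ)| = (k:ℝ) := by
        push_cast; exact abs_of_nonneg (by positivity)
      have habs2 : |(((k:ℤ)+1:ℤ):ℝ)| = (k:ℝ)+1 := by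
        push_cast; exact abs_of_nonneg (by positivity)
      rw [habs2]
      rw [habs1] at h2
      calc |psi H (shiftA 1 (shiftA ((k:ℤ):ℝ) v)) - psi H v|
          ≤ |psi H (shiftA 1 (shiftA ((k:ℤ):ℝ) v)) - psi H (shiftA ((k:ℤ):ℝ) v)|
            + |psi H (shiftA ((k:ℤ):ℝ) v) - psi H v| := by
            exact abs_sub_le _ _ _
        _ ≤ M + M * (k:ℝ) := by linarith
        _ = M * ((k:ℝ)+1) := by ring
  | pred k ih =>
      intro v
      have h1 : shiftA ((-(k:ℤ)-1 : ℤ):ℝ) v = shiftA (-1:ℝ) (shiftA ((-(k:ℤ):ℤ):ℝ) v) := by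
        rw [shiftA_add]; push_cast; ring_nf
      rw [h1]
      have := hMneg (shiftA ((-(k:ℤ):ℤ):ℝ) v)
      have h2 := ih v
      have habs1 : |((-(k:ℤ):ℤ):ℝ)| = (k:ℝ) := by
        push_cast; rw [abs_neg]; exact abs_of_nonneg (by positivity)
      have habs2 : |((-(k:ℤ)-1:ℤ):ℝ)| = (k:ℝ)+1 := by
        push_cast
        rw [show (-(k:ℝ)-1) = -((k:ℝ)+1) by ring, abs_neg]
        exact abs_of_nonneg (by positivity)
      rw [habs2]
      rw [habs1] at h2
      calc |psi H (shiftA (-1:ℝ) (shiftA ((-(k:ℤ):ℤ):ℝ) v)) - psi H v|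
          ≤ |psi H (shiftA (-1:ℝ) (shiftA ((-(k:ℤ):ℤ):ℝ) v)) - psi H (shiftA ((-(k:ℤ):ℤ):ℝ) v)|
            + |psi H (shiftA ((-(k:ℤ):ℤ):ℝ) v) - psi H v| := abs_sub_le _ _ _
        _ ≤ M + M * (k:ℝ) := by linarith
        _ = M * ((k:ℝ)+1) := by ring

lemma psi_global : ∃ A, 0 ≤ A ∧ ∀ v : AnnulusCover, |psi H v| ≤ A * (|v.1| + 1) := by
  obtain ⟨M, hM0, hM⟩ := psi_step F hcomm H n p hH
  obtain ⟨M₀, hM₀'⟩ := isCompact_K0.exists_bound_of_continuousOn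
    (f := psi H) (continuous_psi H).continuousOn
  have hM₀ : ∀ x ∈ K0, |psi H x| ≤ M₀ := by
    intro x hx
    have := hM₀' x hx
    rwa [Real.norm_eq_abs] at this
  have hM₀0 : 0 ≤ M₀ := by
    have := hM₀ ((0:ℝ), ⟨(0:ℝ), by norm_num⟩) (by constructor <;> simp [K0])
    have h2 : (0:ℝ) ≤ |psi H ((0:ℝ), ⟨(0:ℝ), by norm_num⟩)| := abs_nonneg _
    exact le_trans h2 this
  refine ⟨M₀ + M, by linarith, fun v => ?_⟩
  obtain ⟨j, r, hr, hv⟩ := exists_shift_mem v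
  have hstep := psi_shift_int H M hM j r
  have hr1 : r.1 ∈ Set.Icc (0:ℝ) 1 := hr.1
  have hj : |(j:ℝ)| ≤ |v.1| + 1 := by
    have : v.1 = r.1 + (j:ℝ) := by rw [hv, shiftA_fst]
    have h1 : |(j:ℝ)| ≤ |v.1| + |r.1| := by
      rw [show (j:ℝ) = v.1 - r.1 by rw [this]; ring]
      exact abs_sub_le' _ _
    have h2 : |r.1| ≤ 1 := by
      rw [abs_of_nonneg hr1.1]; exact hr1.2
    linarith
  have hpr : |psi H r| ≤ M₀ := hM₀ r hr
  have htri : |psi H v| ≤ |psi H v - psi H r| + |psi H r| := by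
    have := abs_sub_le (psi H v) (psi H r) 0
    simpa using this
  have hst : |psi H v - psi H r| ≤ M * |(j:ℝ)| := by
    rw [hv]; exact hstep
  calc |psi H v| ≤ M * |(j:ℝ)| + M₀ := by linarith
    _ ≤ (M₀ + M) * (|v.1| + 1) := by
        nlinarith [mul_nonneg hM0 (by linarith : (0:ℝ) ≤ |v.1| + 1 - |(j:ℝ)|),
          mul_nonneg hM₀0 (abs_nonneg v.1)]

end Psi

omit hcomm in
lemma tendsto_div_of_linear_bound (f : ℕ → ℝ) (β : ℝ)
    (h : ∀ ε > 0, ∃ C, 0 ≤ C ∧ ∀ m : ℕ, |f m - β * m| ≤ ε * m + C) :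
    Tendsto (fun m : ℕ => f m / m) atTop (nhds β) := by
  rw [Metric.tendsto_atTop]
  intro ε hε
  obtain ⟨C, hC0, hC⟩ := h (ε/4) (by linarith)
  obtain ⟨N0, hN0⟩ := exists_nat_gt (C / (ε/4))
  refine ⟨max N0 1, fun m hm => ?_⟩
  have hm1 : 1 ≤ m := le_trans (le_max_right _ _) hm
  have hmpos : (0:ℝ) < m := by exact_mod_cast hm1
  have hmN : (N0:ℝ) ≤ m := by exact_mod_cast le_trans (le_max_left _ _) hm
  rw [Real.dist_eq]
  have heq : f m / m - β = (f m - β * m)/m := by field_simp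
  rw [heq, abs_div, abs_of_pos hmpos]
  have h1 := hC m
  have hCN : C < (N0:ℝ) * (ε/4) := by
    rw [div_lt_iff₀ (by linarith : (0:ℝ) < ε/4)] at hN0
    exact hN0
  have hCm : C/m < ε/4 := by
    rw [div_lt_iff₀ hmpos]
    nlinarith
  calc |f m - β*m|/m ≤ (ε/4*m + C)/m := by gcongr
    _ = ε/4 + C/m := by field_simp
    _ < ε := by linarith

end Stmt12Aux

set_option maxHeartbeats 2000000 in
open Stmt12Aux Filter in
/-- Renormalization changes the rotation number to `−(aα + b)/{nα}`:
if `F` is a homeomorphism of `ℝ × [0,1]` commuting with `T`, with rotation number `α`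
(the limit defining `ρ(F)` exists and equals `α` at every point), `{nα} ≠ 0`, and `H` is a
homeomorphism with `F_n H = H T` where `F_n = T^{−⌊nα⌋} F^n`, then the rotation number of
`(HJ)^{−1} T^b F^a (HJ)` equals `−(aα + b)/{nα}`. -/
theorem stmt12 (α : ℝ) (F H : AnnulusCover ≃ₜ AnnulusCover)
    (hcomm : ∀ z : AnnulusCover, F (shiftA 1 z) = shiftA 1 (F z))
    (hrot : ∀ z : AnnulusCover, Filter.Tendsto
      (fun m : ℕ => ((((F.toEquiv : Equiv.Perm AnnulusCover) ^ m) z).1 - z.1) / (m : ℝ))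
      Filter.atTop (nhds α))
    (n : ℕ) (hn : 1 ≤ n) (hfrac : Int.fract ((n : ℝ) * α) ≠ 0)
    (a b : ℤ)
    (hH : ∀ z : AnnulusCover,
      shiftA (-(⌊(n : ℝ) * α⌋ : ℝ))
        (((F.toEquiv : Equiv.Perm AnnulusCover) ^ (n : ℤ)) (H z)) = H (shiftA 1 z))
    (z : AnnulusCover) :
    Filter.Tendsto
      (fun m : ℕ =>
        (((fun w : AnnulusCover =>
            Jmap.symm (H.symm (shiftA (b : ℝ)
              (((F.toEquiv : Equiv.Perm AnnulusCover) ^ a) (H (Jmap w))))))^[m] z).1 - z.1)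
          / (m : ℝ))
      Filter.atTop (nhds (-((a : ℝ) * α + (b : ℝ)) / Int.fract ((n : ℝ) * α))) := by
  classical
  have hγpos : 0 ≤ Int.fract ((n:ℝ)*α) := Int.fract_nonneg _
  have hγlt : Int.fract ((n:ℝ)*α) < 1 := Int.fract_lt_one _
  set γ : ℝ := Int.fract ((n:ℝ)*α) with hγdef
  set p : ℤ := ⌊(n:ℝ)*α⌋ with hpdef
  set β : ℝ := ((a:ℝ)*α + (b:ℝ))/γ with hβdef
  have hβγ : β * γ = (a:ℝ)*α + b := div_mul_cancel₀ _ hfrac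
  have hγn : γ = (n:ℝ)*α - (p:ℝ) := by
    rw [hγdef, hpdef]; exact (Int.self_sub_floor _).symm
  set u : AnnulusCover := H (Jmap z) with hudef
  have hJsf : ∀ x : AnnulusCover, (Jmap.symm x).1 = -x.1 := fun x => rfl
  -- iterate formula
  have hiter : ∀ m : ℕ, ((fun w : AnnulusCover =>
        Jmap.symm (H.symm (shiftA (b : ℝ)
          (((F.toEquiv : Equiv.Perm AnnulusCover) ^ a) (H (Jmap w))))))^[m] z)
      = Jmap.symm (H.symm (shiftA (((b*(m:ℤ)) : ℤ):ℝ)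
          (((F.toEquiv : Equiv.Perm AnnulusCover) ^ (a*(m:ℤ))) u))) := by
    intro m
    induction m with
    | zero =>
        simp only [Function.iterate_zero, id_eq, Nat.cast_zero, mul_zero, zpow_zero,
          Int.cast_zero, shiftA_zero, Equiv.Perm.coe_one]
        rw [hudef]
        simp only [id_eq, Homeomorph.symm_apply_apply, Equiv.symm_apply_apply]
    | succ m ih =>
        rw [Function.iterate_succ_apply', ih]
        rw [Equiv.apply_symm_apply, Homeomorph.apply_symm_apply]
        rw [comm_shift_int F hcomm a (b*(m:ℤ)), shiftA_add,
          ← zpow_apply_add F a (a*(m:ℤ)) u]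
        rw [show (a + a*(m:ℤ)) = a*(((m+1:ℕ)):ℤ) by push_cast; ring,
          show (((b*(m:ℤ)):ℤ):ℝ) + (b:ℝ) = (((b*(((m+1:ℕ)):ℤ)):ℤ):ℝ) by push_cast; ring]
  set g : ℕ → AnnulusCover := fun m => shiftA (((b*(m:ℤ)) : ℤ):ℝ)
      (((F.toEquiv : Equiv.Perm AnnulusCover) ^ (a*(m:ℤ))) u) with hgdef
  have hfst : ∀ m : ℕ, (((fun w : AnnulusCover =>
        Jmap.symm (H.symm (shiftA (b : ℝ)
          (((F.toEquiv : Equiv.Perm AnnulusCover) ^ a) (H (Jmap w))))))^[m] z)).1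
      = -(psi H (g m)) := by
    intro m
    rw [hiter m, hJsf]
    rfl
  -- the main estimate
  have hmain : ∀ ε > 0, ∃ C, 0 ≤ C ∧ ∀ m : ℕ, |psi H (g m) - β * m| ≤ ε*m + C := by
    intro ε hε
    obtain ⟨A, hA0, hA⟩ := psi_global F hcomm H n p hH
    set Q : ℝ := |(a:ℝ)| + (n:ℝ)*|β| with hQ
    have hQ0 : 0 ≤ Q := by positivity
    have hD0 : (0:ℝ) < (A+1)*(Q+1) := by nlinarith
    set ε₂ : ℝ := ε/((A+1)*(Q+1)) with hε₂def
    have hε₂pos : 0 < ε₂ := div_pos hε hD0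
    obtain ⟨C₂, hC₂0, hC₂⟩ := unif' F hcomm α hrot ε₂ hε₂pos
    refine ⟨A*(|u.1| + 2 + ε₂*n + C₂) + 1, by positivity, fun m => ?_⟩
    set j : ℤ := ⌊(m:ℝ)*β⌋ with hjdef
    set cm : ℤ := b*m + j*p with hcmdef
    set dm : ℤ := a*m - j*n with hdmdef
    set w : AnnulusCover := shiftA ((cm:ℤ):ℝ)
        (((F.toEquiv : Equiv.Perm AnnulusCover) ^ dm) u) with hwdef
    have hgid : g m = shiftA (((-(j*p)):ℤ):ℝ)
        (((F.toEquiv : Equiv.Perm AnnulusCover) ^ (j*(n:ℤ))) w) := by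
      rw [hwdef, comm_shift_int F hcomm (j*(n:ℤ)) cm, shiftA_add,
        ← zpow_apply_add F (j*(n:ℤ)) dm u]
      rw [hgdef]
      rw [show (j*(n:ℤ) + dm) = a*(m:ℤ) by rw [hdmdef]; ring,
        show ((cm:ℤ):ℝ) + (((-(j*p)):ℤ):ℝ) = (((b*(m:ℤ)):ℤ):ℝ) by rw [hcmdef]; push_cast; ring]
    have hpsig : psi H (g m) = psi H w + j := by
      rw [hgid]; exact psij F hcomm H n p hH j w
    have hfr1 : ((j:ℝ)) ≤ (m:ℝ)*β := Int.floor_le _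
    have hfr2 : (m:ℝ)*β - 1 < j := Int.sub_one_lt_floor _
    have hcmdm : (cm:ℝ) + (dm:ℝ)*α = γ * ((m:ℝ)*β - j) := by
      rw [show ((cm:ℤ):ℝ) = (b:ℝ)*m + (j:ℝ)*p by rw [hcmdef]; push_cast; ring,
        show ((dm:ℤ):ℝ) = (a:ℝ)*m - (j:ℝ)*n by rw [hdmdef]; push_cast; ring]
      have e1 : γ * ((m:ℝ)*β - (j:ℝ)) = (m:ℝ)*(β*γ) - (j:ℝ)*γ := by ring
      rw [e1, hβγ, hγn]
      ring
    have hwfst : (w).1 = u.1 + γ*((m:ℝ)*β - j) + (disp F dm u - (dm:ℝ)*α) := by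
      have h1 : (w).1 = (((F.toEquiv : Equiv.Perm AnnulusCover) ^ dm) u).1 + (cm:ℝ) := by
        rw [hwdef, shiftA_fst]
      have h2 : (((F.toEquiv : Equiv.Perm AnnulusCover) ^ dm) u).1
          = u.1 + disp F dm u := by simp [disp]
      rw [h1, h2]
      linear_combination hcmdm
    have hγfr0 : 0 ≤ γ*((m:ℝ)*β - j) := mul_nonneg hγpos (by linarith)
    have hγfr1 : γ*((m:ℝ)*β - j) ≤ 1 := by nlinarith
    have hdisp := hC₂ dm u
    have hjb : |(j:ℝ)| ≤ (m:ℝ)*|β| + 1 := by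
      rw [abs_le]
      constructor
      · nlinarith [neg_abs_le β, Nat.cast_nonneg (α := ℝ) m]
      · nlinarith [le_abs_self β, Nat.cast_nonneg (α := ℝ) m]
    have hdmb : |(dm:ℝ)| ≤ Q*m + n := by
      rw [show ((dm:ℤ):ℝ) = (a:ℝ)*m - (j:ℝ)*n by rw [hdmdef]; push_cast; ring]
      calc |(a:ℝ)*m - (j:ℝ)*n| ≤ |(a:ℝ)*m| + |(j:ℝ)*n| := abs_sub_le' _ _
        _ = |(a:ℝ)| *m + |(j:ℝ)| *n := by
            rw [abs_mul, abs_mul, abs_of_nonneg (Nat.cast_nonneg (α := ℝ) m),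
              abs_of_nonneg (Nat.cast_nonneg (α := ℝ) n)]
        _ ≤ Q*m + n := by
            rw [hQ]
            nlinarith [hjb, Nat.cast_nonneg (α := ℝ) n, Nat.cast_nonneg (α := ℝ) m,
              abs_nonneg ((j:ℝ))]
    have hwabs : |(w).1| ≤ |u.1| + 1 + (ε₂*(Q*m+n) + C₂) := by
      rw [hwfst]
      have t1 : |u.1 + γ*((m:ℝ)*β - j) + (disp F dm u - (dm:ℝ)*α)|
          ≤ |u.1| + |γ*((m:ℝ)*β - j)| + |disp F dm u - (dm:ℝ)*α| := by
        exact (abs_add_le _ _).trans (by linarith [abs_add_le u.1 (γ*((m:ℝ)*β - j))])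
      have t2 : |γ*((m:ℝ)*β - j)| ≤ 1 := by
        rw [abs_of_nonneg hγfr0]; exact hγfr1
      have t3 : |disp F dm u - (dm:ℝ)*α| ≤ ε₂*(Q*m+n) + C₂ := by
        refine hdisp.trans ?_
        have : ε₂*|(dm:ℝ)| ≤ ε₂*(Q*m+n) :=
          mul_le_mul_of_nonneg_left hdmb hε₂pos.le
        linarith
      linarith
    have hpsiw := hA w
    have hjmb : |(j:ℝ) - (m:ℝ)*β| ≤ 1 := by
      rw [abs_le]; constructor <;> linarith
    have hAQbound : A*ε₂*Q ≤ ε := by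
      have hAQ : A*Q ≤ (A+1)*(Q+1) := by nlinarith
      calc A*ε₂*Q = ε * ((A*Q)/((A+1)*(Q+1))) := by
            rw [hε₂def]; field_simp
        _ ≤ ε * 1 := by
            apply mul_le_mul_of_nonneg_left _ hε.le
            rw [div_le_one hD0]; exact hAQ
        _ = ε := mul_one ε
    calc |psi H (g m) - β*m|
        = |psi H w + ((j:ℝ) - (m:ℝ)*β)| := by
          rw [hpsig]
          rw [show psi H w + (j:ℝ) - β*(m:ℝ) = psi H w + ((j:ℝ) - (m:ℝ)*β) by ring]
      _ ≤ |psi H w| + |(j:ℝ) - (m:ℝ)*β| := abs_add_le _ _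
      _ ≤ A*(|(w).1| + 1) + 1 := by linarith
      _ ≤ A*((|u.1| + 1 + (ε₂*(Q*m+n) + C₂)) + 1) + 1 := by nlinarith
      _ = (A*ε₂*Q)*m + (A*(|u.1| + 2 + ε₂*n + C₂) + 1) := by ring
      _ ≤ ε*m + (A*(|u.1| + 2 + ε₂*n + C₂) + 1) := by
          nlinarith [Nat.cast_nonneg (α := ℝ) m]
  -- conclusion
  have htarget : -((a:ℝ)*α + (b:ℝ)) / γ = -β := by rw [hβdef, neg_div]
  rw [htarget]
  have hbound : ∀ ε > 0, ∃ C, 0 ≤ C ∧ ∀ m : ℕ,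
      abs ((((fun w : AnnulusCover =>
        Jmap.symm (H.symm (shiftA (b : ℝ)
          (((F.toEquiv : Equiv.Perm AnnulusCover) ^ a) (H (Jmap w))))))^[m] z).1 - z.1
        - (-β) * (m:ℝ))) ≤ ε*m + C := by
    intro ε hε
    obtain ⟨C, hC0, hC⟩ := hmain ε hε
    refine ⟨C + |z.1|, by positivity, fun m => ?_⟩
    rw [hfst m]
    have : -(psi H (g m)) - z.1 - (-β)*(m:ℝ) = -((psi H (g m) - β*m) + z.1) := by ring
    rw [this, abs_neg]
    calc |(psi H (g m) - β*m) + z.1| ≤ |psi H (g m) - β*m| + |z.1| := abs_add_le _ _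
      _ ≤ ε*m + C + |z.1| := by linarith [hC m]
      _ = ε*m + (C + |z.1|) := by ring
  exact tendsto_div_of_linear_bound _ (-β) hbound
end

section
/- Let α ∈ (0,1) be irrational with convergents p_n/q_n and n ≥ 1 odd. If k ∈ {1, …, q_{n+1} − 1} and p ∈ ℤ satisfy −{q_{n−1}α} < kα + p < 0 (where {q_{n−1}α} = q_{n−1}α − p_{n−1}), then k = i·q_n and p = −i·p_n for some i ∈ {1, …, a_{n+1}}, where a_{n+1} is the (n+1)-st partial quotient of α. -/
open scoped BigOperators

section Aux

lemma gauss_step {x : ℝ} (hx : x ∈ Set.Ioo (0:ℝ) 1) (hirr : Irrational x) :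
    gaussMap x ∈ Set.Ioo (0:ℝ) 1 ∧ Irrational (gaussMap x) := by
  have hx0 : x ≠ 0 := ne_of_gt hx.1
  have h1 : Irrational (1 / x) := by
    rw [one_div]; exact irrational_inv_iff.mpr hirr
  have hg : gaussMap x = Int.fract (1 / x) := by
    rw [Int.fract]; exact if_neg hx0
  have hirr' : Irrational (gaussMap x) := by
    rw [hg, Int.fract]
    exact (irrational_sub_intCast_iff).mpr h1
  refine ⟨⟨?_, ?_⟩, hirr'⟩
  · rcases lt_or_eq_of_le (Int.fract_nonneg (1 / x)) with h | h
    · rw [hg]; exact h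
    · exfalso; exact hirr'.ne_int 0 (by rw [hg, ← h]; simp)
  · rw [hg]; exact Int.fract_lt_one _

variable {α : ℝ}

lemma alphaSeq_mem (hα : α ∈ Set.Ioo (0:ℝ) 1) (hirr : Irrational α) (m : ℕ) :
    alphaSeq α m ∈ Set.Ioo (0:ℝ) 1 ∧ Irrational (alphaSeq α m) := by
  induction m with
  | zero => exact ⟨hα, hirr⟩
  | succ m ih =>
      have : alphaSeq α (m + 1) = gaussMap (alphaSeq α m) := by
        simp [alphaSeq, Function.iterate_succ_apply']
      rw [this]
      exact gauss_step ih.1 ih.2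

lemma aSeq_pos (hα : α ∈ Set.Ioo (0:ℝ) 1) (hirr : Irrational α) (m : ℕ) : 1 ≤ aSeq α (m + 1) := by
  have h := (alphaSeq_mem hα hirr m).1
  have : (1:ℝ) < 1 / alphaSeq α m := one_lt_one_div h.1 h.2
  exact Int.le_floor.mpr (by exact_mod_cast this.le)

lemma alphaSeq_succ_s14 (hα : α ∈ Set.Ioo (0:ℝ) 1) (hirr : Irrational α) (m : ℕ) :
    alphaSeq α (m + 1) = 1 / alphaSeq α m - aSeq α (m + 1) := by
  have h := (alphaSeq_mem hα hirr m).1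
  have : alphaSeq α (m + 1) = gaussMap (alphaSeq α m) := by
    simp [alphaSeq, Function.iterate_succ_apply']
  rw [this, gaussMap, if_neg (ne_of_gt h.1), aSeq]

lemma qSeq_pos (hα : α ∈ Set.Ioo (0:ℝ) 1) (hirr : Irrational α) (m : ℕ) : 1 ≤ qSeq α m := by
  induction m using Nat.strong_induction_on with
  | _ m ih =>
    match m with
    | 0 => exact le_refl 1
    | 1 =>
        have : qSeq α 1 = aSeq α 1 := by
          rw [qSeq, aSeq]; simp [alphaSeq]
        rw [this]; exact aSeq_pos hα hirr 0
    | m + 2 =>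
        have h1 := ih m (by omega)
        have h2 := ih (m+1) (by omega)
        have h3 := aSeq_pos hα hirr (m+1)
        rw [qSeq]
        nlinarith

noncomputable def betaSeq (α : ℝ) (m : ℕ) : ℝ := (qSeq α m : ℝ) * α - (pSeq α m : ℝ)

lemma betaSeq_succ (hα : α ∈ Set.Ioo (0:ℝ) 1) (hirr : Irrational α) (m : ℕ) :
    betaSeq α (m + 1) = -(alphaSeq α (m + 1)) * betaSeq α m := by
  induction m with
  | zero =>
      have h0 : alphaSeq α 0 = α := rfl
      have ha1 : aSeq α 1 = ⌊1 / α⌋ := by rw [aSeq, h0]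
      have hs := alphaSeq_succ_s14 hα hirr 0
      rw [h0, ha1] at hs
      have ha0 : α ≠ 0 := ne_of_gt hα.1
      have hq1 : qSeq α 1 = ⌊1 / α⌋ := rfl
      simp only [betaSeq, hq1, qSeq, pSeq]
      rw [hs]
      push_cast
      field_simp
      ring
  | succ m ih =>
      have hs := alphaSeq_succ_s14 hα hirr (m + 1)
      have hpos := (alphaSeq_mem hα hirr (m+1)).1.1
      have hne : alphaSeq α (m + 1) ≠ 0 := ne_of_gt hpos
      have hrec : betaSeq α (m + 2)
          = betaSeq α m + (aSeq α (m + 2) : ℝ) * betaSeq α (m + 1) := by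
        simp only [betaSeq, qSeq, pSeq]
        push_cast
        ring
      rw [hrec, hs]
      have hb : betaSeq α m = -(betaSeq α (m+1)) / alphaSeq α (m+1) := by
        rw [ih]; field_simp
      rw [hb]
      field_simp
      ring

lemma betaSeq_sign (hα : α ∈ Set.Ioo (0:ℝ) 1) (hirr : Irrational α) (m : ℕ) : 0 < (-1 : ℝ)^m * betaSeq α m := by
  induction m with
  | zero =>
      simp only [pow_zero, one_mul, betaSeq, qSeq, pSeq]
      push_cast; simpa using hα.1
  | succ m ih =>
      have hpos := (alphaSeq_mem hα hirr m.succ).1.1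
      rw [betaSeq_succ hα hirr m, pow_succ]
      nlinarith

lemma det_eq (m : ℕ) :
    qSeq α m * pSeq α (m + 1) - qSeq α (m + 1) * pSeq α m = (-1 : ℤ)^m := by
  induction m with
  | zero => simp [qSeq, pSeq]
  | succ m ih =>
      have hq : qSeq α (m + 2) = qSeq α m + aSeq α (m + 2) * qSeq α (m + 1) := rfl
      have hp : pSeq α (m + 2) = pSeq α m + aSeq α (m + 2) * pSeq α (m + 1) := rfl
      rw [hq, hp, pow_succ]
      ring_nf
      ring_nf at ih
      linarith

end Aux

/-- Let `α ∈ (0,1)` be irrational with convergents `p_n/q_n`, `n ≥ 1` odd. If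
`k ∈ {1,…,q_{n+1}−1}` and `p ∈ ℤ` satisfy `−{q_{n−1}α} < kα + p < 0`
(where `{q_{n−1}α} = q_{n−1}α − p_{n−1}`), then `k = i·q_n` and `p = −i·p_n`
for some `i ∈ {1,…,a_{n+1}}`. -/
theorem stmt14 (α : ℝ) (hα : α ∈ Set.Ioo (0 : ℝ) 1) (hirr : Irrational α)
    (n : ℕ) (hodd : Odd n) (hn : 1 ≤ n) (k p : ℤ)
    (hk1 : 1 ≤ k) (hk2 : k ≤ qSeq α (n + 1) - 1)
    (hlow : -((qSeq α (n - 1) : ℝ) * α - (pSeq α (n - 1) : ℝ)) < (k : ℝ) * α + (p : ℝ))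
    (hup : (k : ℝ) * α + (p : ℝ) < 0) :
    ∃ i : ℤ, 1 ≤ i ∧ i ≤ aSeq α (n + 1) ∧ k = i * qSeq α n ∧ p = -i * pSeq α n := by
  obtain ⟨m, rfl⟩ : ∃ m, n = m + 1 := ⟨n - 1, (Nat.succ_pred_eq_of_pos hn).symm⟩
  have hmeven : Even m := by
    rcases Nat.even_or_odd m with h | h
    · exact h
    · exact absurd (by simpa using hodd) (by simpa [Nat.odd_add_one] using h)
  have hm1 : m + 1 - 1 = m := rfl
  rw [hm1] at hlow
  -- basic positivity facts
  have hqm := qSeq_pos hα hirr m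
  have hqm1 := qSeq_pos hα hirr (m + 1)
  have hqm2 := qSeq_pos hα hirr (m + 2)
  have ha : 1 ≤ aSeq α (m + 2) := aSeq_pos hα hirr (m + 1)
  have hk2' : k ≤ qSeq α (m + 2) - 1 := hk2
  -- beta values and signs
  obtain ⟨A, hAdef⟩ : ∃ A : ℝ, A = betaSeq α m := ⟨_, rfl⟩
  obtain ⟨B, hBdef⟩ : ∃ B : ℝ, B = -betaSeq α (m + 1) := ⟨_, rfl⟩
  obtain ⟨C, hCdef⟩ : ∃ C : ℝ, C = betaSeq α (m + 2) := ⟨_, rfl⟩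
  have hsm := betaSeq_sign hα hirr m
  have hsm1 := betaSeq_sign hα hirr (m + 1)
  have hsm2 := betaSeq_sign hα hirr (m + 2)
  have hpow : (-1 : ℝ) ^ m = 1 := hmeven.neg_one_pow
  have hA : 0 < A := by rw [hAdef]; rw [hpow] at hsm; linarith
  have hB : 0 < B := by
    rw [hBdef]; rw [pow_succ, hpow] at hsm1; linarith
  have hC : 0 < C := by
    rw [hCdef]; rw [pow_succ, pow_succ, hpow] at hsm2; linarith
  have hCB : C < B := by
    have hs := betaSeq_succ hα hirr (m + 1)
    have hα2 := (alphaSeq_mem hα hirr (m + 2)).1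
    rw [hCdef, hBdef, hs]
    nlinarith [hα2.1, hα2.2]
  have hACB : A = C + (aSeq α (m + 2) : ℝ) * B := by
    have hrec : betaSeq α (m + 2)
        = betaSeq α m + (aSeq α (m + 2) : ℝ) * betaSeq α (m + 1) := by
      simp only [betaSeq, qSeq, pSeq]; push_cast; ring
    rw [hCdef, hAdef, hBdef, hrec]; ring
  -- determinant
  have hdet : qSeq α m * pSeq α (m + 1) - qSeq α (m + 1) * pSeq α m = 1 := by
    rw [det_eq, hmeven.neg_one_pow]
  -- coordinates
  obtain ⟨x, hxdef⟩ : ∃ x : ℤ, x = pSeq α (m + 1) * k + qSeq α (m + 1) * p := ⟨_, rfl⟩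
  obtain ⟨y, hydef⟩ : ∃ y : ℤ, y = -(pSeq α m * k + qSeq α m * p) := ⟨_, rfl⟩
  have hkxy : k = x * qSeq α m + y * qSeq α (m + 1) := by
    rw [hxdef, hydef]; linear_combination k * hdet.symm
  have hpxy : p = -(x * pSeq α m + y * pSeq α (m + 1)) := by
    rw [hxdef, hydef]; linear_combination p * hdet.symm
  have hkR : (k : ℝ) = (x : ℝ) * (qSeq α m : ℝ) + (y : ℝ) * (qSeq α (m + 1) : ℝ) := by
    exact_mod_cast congrArg (Int.cast : ℤ → ℝ) hkxy
  have hpR : (p : ℝ) = -((x : ℝ) * (pSeq α m : ℝ) + (y : ℝ) * (pSeq α (m + 1) : ℝ)) := by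
    exact_mod_cast congrArg (Int.cast : ℤ → ℝ) hpxy
  have hval : (k : ℝ) * α + (p : ℝ) = (x : ℝ) * A - (y : ℝ) * B := by
    rw [hkR, hpR, hAdef, hBdef]; simp only [betaSeq]; ring
  have hlow' : -A < (x : ℝ) * A - (y : ℝ) * B := by
    rw [← hval]; simpa [hAdef, betaSeq] using hlow
  have hup' : (x : ℝ) * A - (y : ℝ) * B < 0 := by rw [← hval]; exact hup
  -- case analysis on x
  rcases lt_trichotomy x 0 with hx | hx | hx
  · -- x ≤ -1 : contradiction
    exfalso
    have hx1 : (x : ℝ) ≤ -1 := by exact_mod_cast (by omega : x ≤ -1)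
    have hxA : ((x : ℝ) + 1) * A ≤ 0 :=
      mul_nonpos_iff.mpr (Or.inr ⟨by linarith, hA.le⟩)
    have hyB : (y : ℝ) * B < 0 := by nlinarith [hlow', hxA]
    have hyneg : y ≤ -1 := by
      by_contra hy
      have hy0 : 0 ≤ y := by omega
      have hy0R : (0 : ℝ) ≤ (y : ℝ) := by exact_mod_cast hy0
      have := mul_nonneg hy0R hB.le
      linarith
    have h1 : x * qSeq α m ≤ -1 * qSeq α m :=
      mul_le_mul_of_nonneg_right (by omega) (by omega)
    have h2 : y * qSeq α (m + 1) ≤ -1 * qSeq α (m + 1) :=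
      mul_le_mul_of_nonneg_right hyneg (by omega)
    linarith [hkxy, h1, h2, hqm, hqm1, hk1]
  · -- x = 0 : the good case
    have hx0R : (x : ℝ) = 0 := by exact_mod_cast hx
    rw [hx0R] at hup' hlow'
    refine ⟨y, ?_, ?_, ?_, ?_⟩
    · have h0 : (0 : ℝ) < (y : ℝ) * B := by linarith
      have hy0 : 0 < y := by
        by_contra hy
        have hy0 : y ≤ 0 := by omega
        have hy0R : (y : ℝ) ≤ 0 := by exact_mod_cast hy0
        have := mul_nonpos_iff.mpr (Or.inr ⟨hy0R, hB.le⟩)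
        linarith
      omega
    · have h1 : (y : ℝ) * B < A := by linarith
      have h2 : (y : ℝ) * B < ((aSeq α (m + 2) : ℝ) + 1) * B := by
        rw [hACB] at h1; nlinarith [h1, hCB]
      have h3 : (y : ℝ) < (aSeq α (m + 2) : ℝ) + 1 :=
        lt_of_mul_lt_mul_right h2 hB.le
      have : y < aSeq α (m + 2) + 1 := by exact_mod_cast h3
      show y ≤ aSeq α (m + 2)
      omega
    · rw [hkxy, hx]; ring
    · rw [hpxy, hx]; ring
  · -- x ≥ 1 : contradiction
    exfalso
    have hx1 : (1 : ℝ) ≤ (x : ℝ) := by exact_mod_cast (by omega : 1 ≤ x)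
    have hxC : C ≤ (x : ℝ) * C := le_mul_of_one_le_left hC.le hx1
    rw [hACB] at hup'
    have hya : ((x : ℝ) * (aSeq α (m + 2) : ℝ)) * B < (y : ℝ) * B := by
      nlinarith [hup', hxC, hC]
    have hya' : (x : ℝ) * (aSeq α (m + 2) : ℝ) < (y : ℝ) :=
      lt_of_mul_lt_mul_right hya hB.le
    have hyz : x * aSeq α (m + 2) + 1 ≤ y := by
      have : x * aSeq α (m + 2) < y := by exact_mod_cast hya'
      omega
    have hq2 : qSeq α (m + 2) = qSeq α m + aSeq α (m + 2) * qSeq α (m + 1) := rfl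
    have haq : 1 * 1 ≤ aSeq α (m + 2) * qSeq α (m + 1) :=
      mul_le_mul ha hqm1 (by norm_num) (by omega)
    have h1 : 0 ≤ (y - (x * aSeq α (m + 2) + 1)) * qSeq α (m + 1) :=
      mul_nonneg (by linarith) (by linarith)
    have h2 : 0 ≤ (x - 1) * (qSeq α m + aSeq α (m + 2) * qSeq α (m + 1)) :=
      mul_nonneg (by omega) (by linarith)
    linarith [h1, h2, hkxy, hk2', hq2, hqm1]
end
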